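/- Let S be an epsilon-finitely G-graded ring (an epsilon-strongly G-graded ring such that the join-closure of {ε_g : g ∈ G} is a finite set). Then for any normal subgroup N of G, the induced G/N-grading is epsilon-strong, and moreover epsilon-finite. -/

import Mathlib

/-- The additive subgroup generated by all products `u * v` with `u ∈ U`, `v ∈ V`. -/
def mulSub {S : Type*} [NonUnitalRing S] (U V : AddSubgroup S) : AddSubgroup S :=
  AddSubgroup.closure (Set.image2 (· * ·) (U : Set S) (V : Set S))

/-- `comp` is a `G`-grading of the ring `S`: the components form an internal direct sum
and `S_g S_h ⊆ S_{gh}`. -/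
def IsGrading {G : Type*} [Group G] [DecidableEq G] {S : Type*} [NonUnitalRing S]
    (comp : G → AddSubgroup S) : Prop :=
  DirectSum.IsInternal comp ∧
    ∀ g h : G, ∀ a ∈ comp g, ∀ b ∈ comp h, a * b ∈ comp (g * h)

/-- The grading `comp` is epsilon-strong: for every `g` there are `ε_g ∈ S_g S_{g⁻¹}` and
`ε'_g ∈ S_{g⁻¹} S_g` with `ε_g s = s = s ε'_g` for all `s ∈ S_g`. -/
def EpsilonStrong {G : Type*} [Group G] {S : Type*} [NonUnitalRing S]
    (comp : G → AddSubgroup S) : Prop :=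
  ∀ g : G, ∃ ε ∈ mulSub (comp g) (comp g⁻¹), ∃ ε' ∈ mulSub (comp g⁻¹) (comp g),
    ∀ s ∈ comp g, ε * s = s ∧ s * ε' = s

/-- The component `S_C = ⊕_{g ∈ C} S_g` of the induced `G/N`-grading. -/
def indComp {G : Type*} [Group G] {S : Type*} [NonUnitalRing S]
    (comp : G → AddSubgroup S) (N : Subgroup G) (C : G ⧸ N) : AddSubgroup S :=
  ⨆ g : {g : G // (g : G ⧸ N) = C}, comp g.1

/-- The closure of a set `A` under the join operation `a ∨ b = a + b - a*b`. -/
inductive JoinClosure {S : Type*} [NonUnitalRing S] (A : Set S) : S → Prop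
  | base {x : S} : x ∈ A → JoinClosure A x
  | join {x y : S} : JoinClosure A x → JoinClosure A y → JoinClosure A (x + y - x * y)

/-- `E` is a set of local units for (the ring with underlying additive group) `T`:
a join-closed set of commuting idempotents contained in `T` such that every element of `T`
has a local unit in `E`. -/
def IsLocalUnitsFor {S : Type*} [NonUnitalRing S] (T : AddSubgroup S) (E : Set S) : Prop :=
  (∀ e ∈ E, e ∈ T) ∧ (∀ e ∈ E, e * e = e) ∧ (∀ e ∈ E, ∀ f ∈ E, e * f = f * e) ∧
  (∀ e ∈ E, ∀ f ∈ E, e + f - e * f ∈ E) ∧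
  (∀ r ∈ T, ∃ f ∈ E, f * r = r ∧ r * f = r)

section Aux
variable {S : Type*} [NonUnitalRing S]

lemma mul_mem_mulSub {U V : AddSubgroup S} {u v : S} (hu : u ∈ U) (hv : v ∈ V) :
    u * v ∈ mulSub U V :=
  AddSubgroup.subset_closure (Set.mem_image2_of_mem hu hv)

lemma mulSub_le {U V W : AddSubgroup S} (h : ∀ u ∈ U, ∀ v ∈ V, u * v ∈ W) :
    mulSub U V ≤ W := by
  refine (AddSubgroup.closure_le _).2 ?_
  rintro x ⟨u, hu, v, hv, rfl⟩
  exact h u hu v hv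

lemma mulSub_mono {U V U' V' : AddSubgroup S} (h1 : U ≤ U') (h2 : V ≤ V') :
    mulSub U V ≤ mulSub U' V' :=
  mulSub_le fun u hu v hv => mul_mem_mulSub (h1 hu) (h2 hv)

lemma mulSub_mul_right {U V : AddSubgroup S} {x y : S} (hx : x ∈ mulSub U V)
    (hy : ∀ v ∈ V, v * y ∈ V) : x * y ∈ mulSub U V := by
  induction hx using AddSubgroup.closure_induction with
  | mem z hz =>
    obtain ⟨u, hu, v, hv, rfl⟩ := hz
    rw [mul_assoc]; exact mul_mem_mulSub hu (hy v hv)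
  | zero => rw [zero_mul]; exact zero_mem _
  | add a b _ _ iha ihb => rw [add_mul]; exact add_mem iha ihb
  | neg a _ iha => rw [neg_mul]; exact neg_mem iha

lemma mulSub_mul_left {U V : AddSubgroup S} {x y : S} (hx : x ∈ mulSub U V)
    (hy : ∀ u ∈ U, y * u ∈ U) : y * x ∈ mulSub U V := by
  induction hx using AddSubgroup.closure_induction with
  | mem z hz =>
    obtain ⟨u, hu, v, hv, rfl⟩ := hz
    rw [← mul_assoc]; exact mul_mem_mulSub (hy u hu) hv
  | zero => rw [mul_zero]; exact zero_mem _
  | add a b _ _ iha ihb => rw [mul_add]; exact add_mem iha ihb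
  | neg a _ iha => rw [mul_neg]; exact neg_mem iha

lemma JoinClosure.mono {A B : Set S} {x : S} (h : JoinClosure A x)
    (hAB : ∀ a ∈ A, JoinClosure B a) : JoinClosure B x := by
  induction h with
  | base h => exact hAB _ h
  | join _ _ ihx ihy => exact ihx.join ihy

lemma JoinClosure.comm {A : Set S} (hcomm : ∀ e ∈ A, ∀ f ∈ A, e * f = f * e)
    {x y : S} (hx : JoinClosure A x) (hy : JoinClosure A y) : x * y = y * x := by
  induction hx generalizing y with
  | @base e he =>
    induction hy with
    | base hf => exact hcomm _ he _ hf
    | @join a b _ _ iha ihb =>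
      have h3 : e * (a * b) = a * b * e := by
        rw [← mul_assoc, iha, mul_assoc, ihb, ← mul_assoc]
      rw [mul_sub, mul_add, sub_mul, add_mul, iha, ihb, h3]
  | @join a b _ _ iha ihb =>
    have h1 := iha hy
    have h2 := ihb hy
    have h3 : a * b * y = y * (a * b) := by
      rw [mul_assoc, h2, ← mul_assoc, h1, mul_assoc]
    rw [sub_mul, add_mul, mul_sub, mul_add, h1, h2, h3]

lemma JoinClosure.idem {A : Set S} (hid : ∀ e ∈ A, e * e = e)
    (hcomm : ∀ e ∈ A, ∀ f ∈ A, e * f = f * e)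
    {x : S} (hx : JoinClosure A x) : x * x = x := by
  induction hx with
  | base he => exact hid _ he
  | @join a b ha hb iha ihb =>
    have hab : a * b = b * a := JoinClosure.comm hcomm ha hb
    have h1 : a * (a * b) = a * b := by rw [← mul_assoc, iha]
    have h2 : b * (a * b) = a * b := by rw [← mul_assoc, ← hab, mul_assoc, ihb]
    have h3 : a * b * a = a * b := by rw [hab, mul_assoc, iha]
    have h4 : a * b * b = a * b := by rw [mul_assoc, ihb]
    have h5 : a * b * (a * b) = a * b := by rw [mul_assoc, h2, h1]
    rw [sub_mul, add_mul, mul_sub, mul_sub, mul_sub, mul_add, mul_add, mul_add,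
      iha, ihb, h1, h2, h3, h4, h5, ← hab]
    abel

lemma exists_join {A : Set S} (hid : ∀ e ∈ A, e * e = e)
    (hcomm : ∀ e ∈ A, ∀ f ∈ A, e * f = f * e) (F : Finset S) :
    F.Nonempty → (↑F : Set S) ⊆ A →
      ∃ y, JoinClosure (↑F : Set S) y ∧ ∀ e ∈ F, y * e = e := by
  classical
  induction F using Finset.induction_on with
  | empty => intro h; exact absurd h Finset.not_nonempty_empty
  | @insert a F haF ih =>
    intro _ hsub
    have haA : a ∈ A := hsub (by simp)
    rcases F.eq_empty_or_nonempty with rfl | hne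
    · refine ⟨a, JoinClosure.base (by simp), ?_⟩
      intro e he
      simp only [Finset.mem_insert, Finset.notMem_empty, or_false] at he
      subst he; exact hid _ haA
    · have hFsub : (↑F : Set S) ⊆ (↑(insert a F) : Set S) :=
        Finset.coe_subset.2 (Finset.subset_insert a F)
      have hsub' : (↑F : Set S) ⊆ A := fun x hx => hsub (hFsub hx)
      obtain ⟨y, hy, hye⟩ := ih hne hsub'
      have hyA : JoinClosure A y := hy.mono fun e he => JoinClosure.base (hsub' he)
      have hcy : a * y = y * a := JoinClosure.comm hcomm (JoinClosure.base haA) hyA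
      refine ⟨a + y - a * y, ?_, ?_⟩
      · exact (JoinClosure.base (by simp)).join
          (hy.mono fun e he => JoinClosure.base (hFsub he))
      · intro e he
        rcases Finset.mem_insert.1 he with rfl | heF
        · rw [sub_mul, add_mul, hid _ haA, hcy, mul_assoc, hid _ haA]; abel
        · have h1 : y * e = e := hye e heF
          rw [sub_mul, add_mul, h1, mul_assoc, h1]; abel

end Aux

lemma iSup_le_addsub {S : Type*} [NonUnitalRing S] {ι : Sort*} (f : ι → AddSubgroup S)
    {p : S → Prop} (h0 : p 0) (hadd : ∀ a b, p a → p b → p (a + b))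
    (hneg : ∀ a, p a → p (-a)) (hmem : ∀ i, ∀ x ∈ f i, p x) :
    ∀ x ∈ ⨆ i, f i, p x := by
  intro x hx
  have h : (⨆ i, f i) ≤
      { carrier := setOf p
        zero_mem' := h0
        add_mem' := fun ha hb => hadd _ _ ha hb
        neg_mem' := fun ha => hneg _ ha } := iSup_le fun i => hmem i
  exact h hx


/-- If `S` is epsilon-finitely `G`-graded (epsilon-strong with finite join-closure of
`{ε_g : g ∈ G}`), then for any normal subgroup `N` the induced `G/N`-grading is
epsilon-strong, and moreover epsilon-finite. -/
theorem stmt16 {G : Type*} [Group G] [DecidableEq G] {S : Type*} [NonUnitalRing S]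
    (comp : G → AddSubgroup S) (hgr : IsGrading comp) (ε : G → S)
    (hε : ∀ g : G, ε g ∈ mulSub (comp g) (comp g⁻¹) ∧
      ∀ s ∈ comp g, ε g * s = s ∧ s * ε g⁻¹ = s)
    (hfin : Set.Finite {x | JoinClosure (Set.range ε) x})
    (N : Subgroup G) [N.Normal] :
    ∃ ε' : G ⧸ N → S,
      (∀ C : G ⧸ N, ε' C ∈ mulSub (indComp comp N C) (indComp comp N C⁻¹) ∧
        ∀ s ∈ indComp comp N C, ε' C * s = s ∧ s * ε' C⁻¹ = s) ∧
      Set.Finite {x | JoinClosure (Set.range ε') x} := by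
  classical
  obtain ⟨-, hmul⟩ := hgr
  have hε1 : ∀ g, ε g ∈ mulSub (comp g) (comp g⁻¹) := fun g => (hε g).1
  have hcomp1 : ∀ g, ε g ∈ comp (1 : G) := fun g =>
    mulSub_le (fun u hu v hv => by simpa using hmul g g⁻¹ u hu v hv) (hε1 g)
  have hrid : ∀ g, ∀ x ∈ mulSub (comp g) (comp g⁻¹), x * ε g = x := by
    intro g x hx
    induction hx using AddSubgroup.closure_induction with
    | mem z hz =>
      obtain ⟨u, hu, v, hv, rfl⟩ := hz
      have h := ((hε g⁻¹).2 v hv).2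
      rw [inv_inv] at h
      rw [mul_assoc, h]
    | zero => rw [zero_mul]
    | add a b _ _ iha ihb => rw [add_mul, iha, ihb]
    | neg a _ iha => rw [neg_mul, iha]
  have hIr : ∀ g, ∀ r ∈ comp (1 : G), ∀ x ∈ mulSub (comp g) (comp g⁻¹),
      x * r ∈ mulSub (comp g) (comp g⁻¹) := fun g r hr x hx =>
    mulSub_mul_right hx (fun v hv => by simpa using hmul g⁻¹ 1 v hv r hr)
  have hIl : ∀ g, ∀ r ∈ comp (1 : G), ∀ x ∈ mulSub (comp g) (comp g⁻¹),
      r * x ∈ mulSub (comp g) (comp g⁻¹) := fun g r hr x hx =>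
    mulSub_mul_left hx (fun u hu => by simpa using hmul 1 g r hr u hu)
  have hlid : ∀ g, ∀ x ∈ mulSub (comp g) (comp g⁻¹), ε g * x = x := by
    intro g x hx
    induction hx using AddSubgroup.closure_induction with
    | mem z hz =>
      obtain ⟨u, hu, v, hv, rfl⟩ := hz
      rw [← mul_assoc, ((hε g).2 u hu).1]
    | zero => rw [mul_zero]
    | add a b _ _ iha ihb => rw [mul_add, iha, ihb]
    | neg a _ iha => rw [mul_neg, iha]
  have hcommε : ∀ g h, ε g * ε h = ε h * ε g := by
    intro g h
    have m1 := hIr g (ε h) (hcomp1 h) _ (hε1 g)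
    have m2 := hIl g (ε h) (hcomp1 h) _ (hε1 g)
    have e1 : ε g * ε h * ε g = ε g * ε h := hrid g _ m1
    have e2 : ε g * (ε h * ε g) = ε h * ε g := hlid g _ m2
    rw [← e1, mul_assoc, e2]
  have hid₀ : ∀ e ∈ Set.range ε, e * e = e := by
    rintro e ⟨g, rfl⟩; exact hrid g _ (hε1 g)
  have hcomm₀ : ∀ e ∈ Set.range ε, ∀ f ∈ Set.range ε, e * f = f * e := by
    rintro e ⟨g, rfl⟩ f ⟨h, rfl⟩; exact hcommε g h
  have hrangefin : (Set.range ε).Finite :=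
    hfin.subset fun x hx => JoinClosure.base hx
  -- the sets of idempotents attached to each coset
  set A : (G ⧸ N) → Set S := fun C => ε '' {g : G | (g : G ⧸ N) = C} with hA
  have hAsub : ∀ C, A C ⊆ Set.range ε := fun C => Set.image_subset_range ε _
  have ex : ∀ C : G ⧸ N, ∃ y, JoinClosure (A C) y ∧ ∀ e ∈ A C, y * e = e := by
    intro C
    have hAfin : (A C).Finite := hrangefin.subset (hAsub C)
    have hAne : (A C).Nonempty := by
      obtain ⟨g, hg⟩ := QuotientGroup.mk_surjective (s := N) C
      exact ⟨ε g, g, hg, rfl⟩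
    obtain ⟨y, hy, hye⟩ := exists_join hid₀ hcomm₀ hAfin.toFinset
      (by simpa using hAne) (by rw [Set.Finite.coe_toFinset]; exact hAsub C)
    rw [Set.Finite.coe_toFinset] at hy
    exact ⟨y, hy, fun e he => hye e (hAfin.mem_toFinset.2 he)⟩
  choose ε' h1 h2 using ex
  have hε'range : ∀ C, JoinClosure (Set.range ε) (ε' C) := fun C =>
    (h1 C).mono fun a ha => JoinClosure.base (hAsub C ha)
  have habs : ∀ (C : G ⧸ N) (g : G), ((g : G ⧸ N) = C) → ε' C * ε g = ε g :=
    fun C g hg => h2 C (ε g) ⟨g, hg, rfl⟩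
  have comp_le_ind : ∀ (C : G ⧸ N) (g : G), ((g : G ⧸ N) = C) →
      comp g ≤ indComp comp N C := fun C g hg =>
    le_iSup (fun p : {g : G // (g : G ⧸ N) = C} => comp p.1) ⟨g, hg⟩
  have hqinv : ∀ g : G, ((g⁻¹ : G) : G ⧸ N) = ((g : G ⧸ N))⁻¹ := fun g => rfl
  have hind : ∀ C D : G ⧸ N, ∀ a ∈ indComp comp N C, ∀ b ∈ indComp comp N D,
      a * b ∈ indComp comp N (C * D) := by
    intro C D
    have inner : ∀ (x : S) (g : G), ((g : G ⧸ N) = C) → x ∈ comp g →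
        ∀ b ∈ indComp comp N D, x * b ∈ indComp comp N (C * D) := by
      intro x g hg hx
      unfold indComp
      refine iSup_le_addsub _ ?_ ?_ ?_ ?_
      · rw [mul_zero]; exact zero_mem _
      · intro a b ha hb; rw [mul_add]; exact add_mem ha hb
      · intro a ha; rw [mul_neg]; exact neg_mem ha
      · rintro ⟨h, hh⟩ y hy
        exact comp_le_ind (C * D) (g * h)
          (by rw [QuotientGroup.mk_mul, hg, hh]) (hmul g h x hx y hy)
    unfold indComp
    refine iSup_le_addsub _ ?_ ?_ ?_ ?_
    · intro b hb; rw [zero_mul]; exact zero_mem _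
    · intro a b ha hb c hc; rw [add_mul]; exact add_mem (ha c hc) (hb c hc)
    · intro a ha c hc; rw [neg_mul]; exact neg_mem (ha c hc)
    · rintro ⟨g, hg⟩ x hx
      have := inner x g hg hx
      unfold indComp at this
      exact this
  have hmemI : ∀ C : G ⧸ N, ε' C ∈ mulSub (indComp comp N C) (indComp comp N C⁻¹) := by
    intro C
    have key : ∀ x, JoinClosure (A C) x →
        x ∈ mulSub (indComp comp N C) (indComp comp N C⁻¹) := by
      intro x hx
      induction hx with
      | base hx =>
        obtain ⟨g, hg, rfl⟩ := hx
        exact mulSub_mono (comp_le_ind C g hg)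
          (comp_le_ind C⁻¹ g⁻¹ (by rw [hqinv, hg])) (hε1 g)
      | @join x y hx hy ihx ihy =>
        refine sub_mem (add_mem ihx ihy) ?_
        refine mulSub_mul_right ihx ?_
        intro v hv
        have hy1 : y ∈ indComp comp N (C * C⁻¹) :=
          mulSub_le (fun u hu w hw => hind C C⁻¹ u hu w hw) ihy
        have := hind C⁻¹ (C * C⁻¹) v hv y hy1
        simpa using this
    exact key _ (h1 C)
  have hL : ∀ C : G ⧸ N, ∀ s ∈ indComp comp N C, ε' C * s = s := by
    intro C
    unfold indComp
    refine iSup_le_addsub _ (mul_zero _) ?_ ?_ ?_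
    · intro a b ha hb; rw [mul_add, ha, hb]
    · intro a ha; rw [mul_neg, ha]
    · rintro ⟨g, hg⟩ x hx
      have h3 : ε g * x = x := ((hε g).2 x hx).1
      rw [← h3, ← mul_assoc, habs C g hg]
  have hR : ∀ C : G ⧸ N, ∀ s ∈ indComp comp N C, s * ε' C⁻¹ = s := by
    intro C
    unfold indComp
    refine iSup_le_addsub _ (zero_mul _) ?_ ?_ ?_
    · intro a b ha hb; rw [add_mul, ha, hb]
    · intro a ha; rw [neg_mul, ha]
    · rintro ⟨g, hg⟩ x hx
      have e1 : ε' C⁻¹ * ε g⁻¹ = ε g⁻¹ := habs C⁻¹ g⁻¹ (by rw [hqinv, hg])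
      have e2 : ε g⁻¹ * ε' C⁻¹ = ε g⁻¹ := by
        rw [JoinClosure.comm hcomm₀ (JoinClosure.base ⟨g⁻¹, rfl⟩) (hε'range C⁻¹), e1]
      have h3 : x * ε g⁻¹ = x := ((hε g).2 x hx).2
      calc x * ε' C⁻¹ = x * ε g⁻¹ * ε' C⁻¹ := by rw [h3]
        _ = x * (ε g⁻¹ * ε' C⁻¹) := mul_assoc _ _ _
        _ = x * ε g⁻¹ := by rw [e2]
        _ = x := h3
  refine ⟨ε', fun C => ⟨hmemI C, fun s hs => ⟨hL C s hs, hR C s hs⟩⟩, ?_⟩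
  refine hfin.subset fun x hx => ?_
  exact hx.mono (by rintro a ⟨C, rfl⟩; exact hε'range C)
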